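/- Let d ≥ 1, let H be a complex Hilbert space, let U be a strongly continuous unitary representation of ℝ^d on H, and let D ⊆ H be a dense subset. Then the set of vectors of the form ∫_{ℝ^d} f(x)·U(x)ψ dx (a Bochner integral), where ψ ranges over D and f ranges over the Schwartz functions on ℝ^d whose Fourier transform has compact support, is dense in H. -/

import Mathlib

open Filter Topology MeasureTheory
open scoped FourierTransform

open Metric
open scoped RealInnerProductSpace ContDiff

noncomputable section DenseSmearedAux

/-- A smooth compactly supported function as a Schwartz map. -/
def dsToSchwartzMap {E F : Type*} [NormedAddCommGroup E] [NormedSpace ℝ E]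
    [NormedAddCommGroup F] [NormedSpace ℝ F] {f : E → F}
    (hf : ContDiff ℝ ∞ f) (h'f : HasCompactSupport f) : SchwartzMap E F where
  toFun := f
  smooth' := hf
  decay' := by
    intro k n
    have h1 : Continuous fun x => ‖x‖ ^ k * ‖iteratedFDeriv ℝ n f x‖ :=
      (continuous_norm.pow k).mul (hf.continuous_iteratedFDeriv (by exact_mod_cast le_top)).norm
    have h2 : HasCompactSupport fun x => ‖x‖ ^ k * ‖iteratedFDeriv ℝ n f x‖ := by
      have := (HasCompactSupport.iteratedFDeriv (𝕜 := ℝ) h'f n).comp_left (g := norm) norm_zero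
      exact this.mul_left
    obtain ⟨C, hC⟩ := h1.bounded_above_of_compact_support h2
    exact ⟨C, fun x => by simpa using hC x⟩

variable (d : ℕ)

local notation "𝔼" => EuclideanSpace ℝ (Fin d)

def dsBump : ContDiffBump (0 : 𝔼) := ⟨1, 2, one_pos, one_lt_two⟩

def dsG : SchwartzMap 𝔼 ℂ := by
  refine dsToSchwartzMap (f := fun x => ((dsBump d) x : ℂ)) ?_ ?_
  · exact Complex.ofRealCLM.contDiff.comp ((dsBump d).contDiff (n := ⊤))
  · exact (dsBump d).hasCompactSupport.comp_left (g := fun r : ℝ => (r : ℂ)) (by simp)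

lemma dsG_apply (x : 𝔼) : dsG d x = ((dsBump d) x : ℂ) := rfl

lemma dsG_compact : HasCompactSupport ⇑(dsG d) :=
  (dsBump d).hasCompactSupport.comp_left (g := fun r : ℝ => (r : ℂ)) (by simp)

lemma dsG_zero : dsG d 0 = 1 := by
  rw [dsG_apply, (dsBump d).one_of_mem_closedBall (Metric.mem_closedBall_self (by norm_num [dsBump]))]
  norm_num

def dsF : SchwartzMap 𝔼 ℂ := (SchwartzMap.fourierTransformCLE ℂ (SchwartzMap 𝔼 ℂ)).symm (dsG d)

lemma dsF_fourier : 𝓕 ⇑(dsF d) = ⇑(dsG d) := by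
  have h : (SchwartzMap.fourierTransformCLE ℂ (SchwartzMap 𝔼 ℂ)) (dsF d) = dsG d :=
    (SchwartzMap.fourierTransformCLE ℂ (SchwartzMap 𝔼 ℂ)).apply_symm_apply (dsG d)
  rw [← h]; rfl

lemma dsF_integral : ∫ x, dsF d x = 1 := by
  have h : 𝓕 ⇑(dsF d) 0 = ∫ x, dsF d x := by
    rw [Real.fourier_eq]
    simp
  rw [← dsG_zero d, ← dsF_fourier d, h]


open MeasureTheory.Measure in
lemma dsFinrank : Module.finrank ℝ 𝔼 = d := finrank_euclideanSpace_fin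

def dsDil (c : ℝ) (hc : c ≠ 0) : 𝔼 ≃L[ℝ] 𝔼 :=
  (LinearEquiv.smulOfNeZero ℝ 𝔼 c hc).toContinuousLinearEquiv

def dsFc (c : ℝ) (hc : c ≠ 0) : SchwartzMap 𝔼 ℂ :=
  (c ^ d : ℝ) • (SchwartzMap.compCLMOfContinuousLinearEquiv ℝ (dsDil d c hc) (dsF d))

lemma dsFc_apply (c : ℝ) (hc : c ≠ 0) (x : 𝔼) :
    dsFc d c hc x = (c ^ d : ℝ) • dsF d (c • x) := rfl

open MeasureTheory.Measure in
lemma dsFc_integral (c : ℝ) (hc : 0 < c) : ∫ x, dsFc d c hc.ne' x = 1 := by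
  simp_rw [dsFc_apply]
  rw [integral_smul, integral_comp_smul_of_nonneg (volume : Measure 𝔼)
    (fun y => dsF d y) c (hR := hc.le), dsFinrank, smul_smul,
    mul_inv_cancel₀ (pow_ne_zero _ hc.ne'), dsF_integral d, one_smul]

open MeasureTheory.Measure in
lemma dsFc_norm_integral (c : ℝ) (hc : 0 < c) :
    ∫ x, ‖dsFc d c hc.ne' x‖ = ∫ y, ‖dsF d y‖ := by
  have : ∀ x : 𝔼, ‖dsFc d c hc.ne' x‖ = c ^ d * ‖dsF d (c • x)‖ := by
    intro x
    rw [dsFc_apply, norm_smul, Real.norm_eq_abs, abs_of_pos (pow_pos hc _)]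
  simp_rw [this]
  rw [integral_const_mul, integral_comp_smul_of_nonneg (volume : Measure 𝔼)
    (fun y => ‖dsF d y‖) c (hR := hc.le), dsFinrank, smul_eq_mul, ← mul_assoc,
    mul_inv_cancel₀ (pow_ne_zero _ hc.ne'), one_mul]

open MeasureTheory.Measure in
lemma dsFc_ball (c r : ℝ) (hc : 0 < c) (hr : 0 ≤ r) :
    ∫ x in Metric.closedBall (0 : 𝔼) r, ‖dsFc d c hc.ne' x‖
      = ∫ y in Metric.closedBall (0 : 𝔼) (c * r), ‖dsF d y‖ := by
  have : ∀ x : 𝔼, ‖dsFc d c hc.ne' x‖ = c ^ d * ‖dsF d (c • x)‖ := by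
    intro x
    rw [dsFc_apply, norm_smul, Real.norm_eq_abs, abs_of_pos (pow_pos hc _)]
  simp_rw [this]
  rw [integral_const_mul, setIntegral_comp_smul_of_pos (volume : Measure 𝔼)
    (fun y => ‖dsF d y‖) (Metric.closedBall (0 : 𝔼) r) hc, dsFinrank,
    smul_closedBall c (0 : 𝔼) hr, smul_zero, Real.norm_eq_abs, abs_of_pos hc,
    smul_eq_mul, ← mul_assoc, mul_inv_cancel₀ (pow_ne_zero _ hc.ne'), one_mul]

lemma dsF_ball_tendsto :
    Filter.Tendsto (fun R : ℝ => ∫ y in Metric.closedBall (0 : 𝔼) R, ‖dsF d y‖)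
      Filter.atTop (𝓝 (∫ y, ‖dsF d y‖)) :=
  (MeasureTheory.aecover_closedBall tendsto_id).integral_tendsto_of_countably_generated
    ((dsF d).integrable.norm)

open MeasureTheory.Measure in
lemma dsFc_fourier (c : ℝ) (hc : 0 < c) :
    𝓕 ⇑(dsFc d c hc.ne') = fun ξ => dsG d (c⁻¹ • ξ) := by
  funext ξ
  rw [Real.fourier_eq]
  have step : ∀ v : 𝔼, 𝐞 (-⟪v, ξ⟫) • dsFc d c hc.ne' v
      = (c ^ d : ℝ) • ((fun y : 𝔼 => 𝐞 (-⟪y, c⁻¹ • ξ⟫) • dsF d y) (c • v)) := by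
    intro v
    simp only [dsFc_apply]
    rw [smul_comm]
    congr 2
    rw [real_inner_smul_left, real_inner_smul_right]
    field_simp
  simp_rw [step]
  rw [integral_smul, integral_comp_smul_of_nonneg (volume : Measure 𝔼)
    (fun y : 𝔼 => 𝐞 (-⟪y, c⁻¹ • ξ⟫) • dsF d y) c (hR := hc.le), dsFinrank,
    smul_smul, mul_inv_cancel₀ (pow_ne_zero _ hc.ne'), one_smul]
  exact congrFun (dsF_fourier d) (c⁻¹ • ξ)

lemma dsFc_fourier_compact (c : ℝ) (hc : 0 < c) :
    HasCompactSupport (𝓕 ⇑(dsFc d c hc.ne')) := by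
  rw [dsFc_fourier d c hc]
  exact (dsG_compact d).comp_isClosedEmbedding
    (Homeomorph.smulOfNeZero (c⁻¹) (inv_ne_zero hc.ne')).isClosedEmbedding


lemma dsIntegrable_smul {H : Type*} [NormedAddCommGroup H] [NormedSpace ℂ H]
    (f : SchwartzMap 𝔼 ℂ) {g : 𝔼 → H} (hg : Continuous g) (C : ℝ) (hC : ∀ x, ‖g x‖ ≤ C) :
    Integrable (fun x => f x • g x) := by
  refine Integrable.mono' (f.integrable.norm.mul_const C) ?_ ?_
  · exact (f.continuous.smul hg).aestronglyMeasurable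
  · refine Filter.Eventually.of_forall fun x => ?_
    rw [norm_smul]
    exact mul_le_mul_of_nonneg_left (hC x) (norm_nonneg _)

end DenseSmearedAux


/-- Density claim from the proof of Lemma 3.1(b) of the paper: given a strongly continuous
unitary representation `U` of `ℝ^d` (`d ≥ 1`) on a complex Hilbert space `H` and a dense
subset `D ⊆ H`, the vectors `∫ f(x) U(x) ψ dx`, with `ψ ∈ D` and `f` Schwartz with
compactly supported Fourier transform, form a dense subset of `H`. -/
theorem dense_smeared_vectors (d : ℕ) (hd : 1 ≤ d)
    {H : Type*} [NormedAddCommGroup H] [InnerProductSpace ℂ H] [CompleteSpace H]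
    (U : EuclideanSpace ℝ (Fin d) → H →L[ℂ] H)
    (hU0 : U 0 = 1)
    (hUadd : ∀ x y, U (x + y) = U x * U y)
    (hUunitary : ∀ x, U x ∈ unitary (H →L[ℂ] H))
    (hUcont : ∀ ψ : H, Continuous fun x => U x ψ)
    (D : Set H) (hD : Dense D) :
    Dense {v : H | ∃ ψ ∈ D, ∃ f : SchwartzMap (EuclideanSpace ℝ (Fin d)) ℂ,
      HasCompactSupport (𝓕 (⇑f)) ∧ v = ∫ x, f x • U x ψ} := by
  set S := {v : H | ∃ ψ ∈ D, ∃ f : SchwartzMap (EuclideanSpace ℝ (Fin d)) ℂ,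
      HasCompactSupport (𝓕 (⇑f)) ∧ v = ∫ x, f x • U x ψ} with hSdef
  suffices key : ∀ ψ ∈ D, ψ ∈ closure S by
    have h1 : closure D ⊆ closure S := closure_minimal key isClosed_closure
    rw [hD.closure_eq] at h1
    rw [dense_iff_closure_eq]
    exact Set.eq_univ_of_univ_subset h1
  intro ψ hψ
  rw [Metric.mem_closure_iff]
  intro ε hε
  -- norm preservation
  have hUn : ∀ x, ‖U x ψ‖ = ‖ψ‖ := fun x =>
    ContinuousLinearMap.norm_map_of_mem_unitary (hUunitary x) ψ
  have hdiff2 : ∀ x, ‖U x ψ - ψ‖ ≤ 2 * ‖ψ‖ := fun x =>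
    (norm_sub_le _ _).trans (by rw [hUn]; linarith)
  -- constants
  set M := ∫ y, ‖dsF d y‖ with hMdef
  have hM0 : 0 ≤ M := integral_nonneg fun y => norm_nonneg _
  set ε1 := ε / (2 * (M + 1)) with hε1def
  have hε1pos : 0 < ε1 := by positivity
  set ε2 := ε / (2 * (2 * ‖ψ‖ + 1)) with hε2def
  have hε2pos : 0 < ε2 := by positivity
  -- continuity at 0
  have hcont : ContinuousAt (fun x => U x ψ) 0 := (hUcont ψ).continuousAt
  rw [Metric.continuousAt_iff] at hcont
  obtain ⟨δ, hδpos, hδ⟩ := hcont ε1 hε1pos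
  set r := δ / 2 with hrdef
  have hrpos : 0 < r := by positivity
  have hr_ball : ∀ x : EuclideanSpace ℝ (Fin d), x ∈ Metric.closedBall (0 : EuclideanSpace ℝ (Fin d)) r →
      ‖U x ψ - ψ‖ ≤ ε1 := by
    intro x hx
    have h1 : dist x 0 < δ := lt_of_le_of_lt (Metric.mem_closedBall.1 hx) (by linarith)
    have h2 := hδ h1
    rw [dist_eq_norm] at h2
    have h3 : U (0 : EuclideanSpace ℝ (Fin d)) ψ = ψ := by rw [hU0]; rfl
    rw [h3] at h2
    exact h2.le
  -- choose the dilation parameter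
  obtain ⟨R₀, hR₀⟩ := Filter.eventually_atTop.1
    ((tendsto_order.1 (dsF_ball_tendsto d)).1 (M - ε2) (by linarith))
  set c := max 1 (R₀ / r) with hcdef
  have hc : 0 < c := lt_of_lt_of_le one_pos (le_max_left _ _)
  have hcr : R₀ ≤ c * r := by
    have := le_max_right 1 (R₀ / r)
    calc R₀ = R₀ / r * r := by field_simp
    _ ≤ c * r := by
      apply mul_le_mul_of_nonneg_right this hrpos.le
  have hB : M - ε2 < ∫ y in Metric.closedBall (0 : EuclideanSpace ℝ (Fin d)) (c * r), ‖dsF d y‖ :=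
    hR₀ (c * r) hcr
  set fc := dsFc d c hc.ne' with hfc
  -- integrabilities
  have hI1 : Integrable (fun x => fc x • U x ψ) :=
    dsIntegrable_smul d fc (hUcont ψ) ‖ψ‖ (fun x => (hUn x).le)
  have hI2 : Integrable (fun x => fc x • (U x ψ - ψ)) :=
    dsIntegrable_smul d fc ((hUcont ψ).sub continuous_const) (2 * ‖ψ‖) hdiff2
  have hI3 : Integrable (fun x => ‖fc x‖ * ‖U x ψ - ψ‖) := by
    refine Integrable.mono' (fc.integrable.norm.mul_const (2 * ‖ψ‖)) ?_ ?_
    · exact (fc.continuous.norm.mul ((hUcont ψ).sub continuous_const).norm).aestronglyMeasurable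
    · refine Filter.Eventually.of_forall fun x => ?_
      have : (0:ℝ) ≤ ‖fc x‖ * ‖U x ψ - ψ‖ := by positivity
      rw [Real.norm_eq_abs, abs_of_nonneg this]
      exact mul_le_mul_of_nonneg_left (hdiff2 x) (norm_nonneg _)
  -- the candidate vector
  refine ⟨∫ x, fc x • U x ψ, ⟨ψ, hψ, fc, dsFc_fourier_compact d c hc, rfl⟩, ?_⟩
  -- rewrite the difference
  have hsub : (∫ x, fc x • U x ψ) - ψ = ∫ x, fc x • (U x ψ - ψ) := by
    have h4 : (fun x => fc x • (U x ψ - ψ)) = fun x => fc x • U x ψ - fc x • ψ := by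
      funext x; rw [smul_sub]
    rw [h4, integral_sub hI1 (fc.integrable.smul_const ψ), integral_smul_const,
      dsFc_integral d c hc, one_smul]
  have hnorm : ‖(∫ x, fc x • U x ψ) - ψ‖ ≤ ∫ x, ‖fc x‖ * ‖U x ψ - ψ‖ := by
    rw [hsub]
    refine (norm_integral_le_integral_norm _).trans_eq ?_
    congr 1
    funext x
    exact norm_smul _ _
  set s := Metric.closedBall (0 : EuclideanSpace ℝ (Fin d)) r with hsdef
  have hsplit : (∫ x, ‖fc x‖ * ‖U x ψ - ψ‖)
      = (∫ x in s, ‖fc x‖ * ‖U x ψ - ψ‖) + ∫ x in sᶜ, ‖fc x‖ * ‖U x ψ - ψ‖ :=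
    (integral_add_compl measurableSet_closedBall hI3).symm
  -- first piece
  have hpart1 : (∫ x in s, ‖fc x‖ * ‖U x ψ - ψ‖) < ε / 2 := by
    have hstep1 : (∫ x in s, ‖fc x‖ * ‖U x ψ - ψ‖) ≤ ∫ x in s, ‖fc x‖ * ε1 := by
      refine setIntegral_mono_on hI3.integrableOn
        ((fc.integrable.norm.mul_const ε1).integrableOn) measurableSet_closedBall ?_
      intro x hx
      exact mul_le_mul_of_nonneg_left (hr_ball x hx) (norm_nonneg _)
    have hstep2 : (∫ x in s, ‖fc x‖ * ε1) = (∫ x in s, ‖fc x‖) * ε1 := by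
      rw [integral_mul_const]
    have hstep3 : (∫ x in s, ‖fc x‖) ≤ M := by
      have := setIntegral_le_integral (μ := volume) (s := s) (fc.integrable (μ := volume)).norm
        (Filter.Eventually.of_forall fun x => norm_nonneg _)
      rw [dsFc_norm_integral d c hc] at this
      exact this
    have hfin : (M + 1) * ε1 = ε / 2 := by
      rw [hε1def]; field_simp
    calc (∫ x in s, ‖fc x‖ * ‖U x ψ - ψ‖) ≤ (∫ x in s, ‖fc x‖) * ε1 := by
          rw [← hstep2]; exact hstep1
    _ ≤ M * ε1 := mul_le_mul_of_nonneg_right hstep3 hε1pos.le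
    _ < (M + 1) * ε1 := by nlinarith
    _ = ε / 2 := hfin
  -- second piece
  have hball_eq : (∫ x in s, ‖fc x‖) = ∫ y in Metric.closedBall (0 : EuclideanSpace ℝ (Fin d)) (c * r), ‖dsF d y‖ :=
    dsFc_ball d c r hc hrpos.le
  have hcompl_eq : (∫ x in sᶜ, ‖fc x‖) = M - ∫ y in Metric.closedBall (0 : EuclideanSpace ℝ (Fin d)) (c * r), ‖dsF d y‖ := by
    have h5 := integral_add_compl (μ := volume) measurableSet_closedBall (s := s) (fc.integrable (μ := volume)).norm
    rw [dsFc_norm_integral d c hc] at h5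
    rw [← hball_eq]
    linarith
  have hcompl_lt : (∫ x in sᶜ, ‖fc x‖) < ε2 := by rw [hcompl_eq]; linarith
  have hcompl_nonneg : (0:ℝ) ≤ ∫ x in sᶜ, ‖fc x‖ :=
    integral_nonneg fun x => norm_nonneg _
  have hpart2 : (∫ x in sᶜ, ‖fc x‖ * ‖U x ψ - ψ‖) < ε / 2 := by
    have hstep1 : (∫ x in sᶜ, ‖fc x‖ * ‖U x ψ - ψ‖) ≤ ∫ x in sᶜ, ‖fc x‖ * (2 * ‖ψ‖) := by
      refine setIntegral_mono_on hI3.integrableOn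
        ((fc.integrable.norm.mul_const (2 * ‖ψ‖)).integrableOn)
        measurableSet_closedBall.compl ?_
      intro x _
      exact mul_le_mul_of_nonneg_left (hdiff2 x) (norm_nonneg _)
    have hstep2 : (∫ x in sᶜ, ‖fc x‖ * (2 * ‖ψ‖)) = (∫ x in sᶜ, ‖fc x‖) * (2 * ‖ψ‖) := by
      rw [integral_mul_const]
    have hfin : ε2 * (2 * ‖ψ‖ + 1) = ε / 2 := by
      rw [hε2def]; field_simp
    have hψ0 := norm_nonneg ψ
    calc (∫ x in sᶜ, ‖fc x‖ * ‖U x ψ - ψ‖) ≤ (∫ x in sᶜ, ‖fc x‖) * (2 * ‖ψ‖) := by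
          rw [← hstep2]; exact hstep1
    _ ≤ (∫ x in sᶜ, ‖fc x‖) * (2 * ‖ψ‖ + 1) := by
          apply mul_le_mul_of_nonneg_left _ hcompl_nonneg
          linarith
    _ < ε2 * (2 * ‖ψ‖ + 1) := by
          apply mul_lt_mul_of_pos_right hcompl_lt
          linarith
    _ = ε / 2 := hfin
  -- conclude
  have : ‖(∫ x, fc x • U x ψ) - ψ‖ < ε := by
    calc ‖(∫ x, fc x • U x ψ) - ψ‖ ≤ ∫ x, ‖fc x‖ * ‖U x ψ - ψ‖ := hnorm
    _ = _ + _ := hsplit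
    _ < ε / 2 + ε / 2 := add_lt_add hpart1 hpart2
    _ = ε := by ring
  rw [dist_comm, dist_eq_norm]
  exact this
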